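/- Let ρ ∈ 𝓗^d ⊗ 𝓗^d be Hermitian with ρ_max := max_{i,j∈[d]} ρ_{ij,ij} > 0, let t ≥ 2 be an integer, and set R = 2d·√ρ_max. Then for every Hermitian matrix Λ ∈ ℂ^{d²×d²} with operator norm ‖Λ‖ ≤ R^{−2}, the polynomial 1 − ∑_{i,i',j,j'∈[d]} conj(Λ_{ij,i'j'}) · x_i x̄_{i'} y_j ȳ_{j'} belongs to the truncated quadratic module 𝓜(S_ρ)_{2t}. In particular Λ = 0 lies in the interior of the feasible region of the dual program. -/

import Mathlib

open MvPolynomial ComplexOrder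
open scoped ENNReal

/-- Variables of `ℂ[x,x̄,y,ȳ]` for the bipartite setting: `x_i, x̄_i, y_j, ȳ_j`. -/
abbrev SVar (d : ℕ) := (Fin d ⊕ Fin d) ⊕ (Fin d ⊕ Fin d)

/-- The polynomial ring `ℂ[x,x̄,y,ȳ]`. -/
abbrev SPoly (d : ℕ) := MvPolynomial (SVar d) ℂ

def xv {d : ℕ} (i : Fin d) : SVar d := Sum.inl (Sum.inl i)
def xbv {d : ℕ} (i : Fin d) : SVar d := Sum.inl (Sum.inr i)
def yv {d : ℕ} (j : Fin d) : SVar d := Sum.inr (Sum.inl j)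
def ybv {d : ℕ} (j : Fin d) : SVar d := Sum.inr (Sum.inr j)

/-- The conjugate polynomial: conjugate the coefficients and exchange each
variable with its barred version. -/
noncomputable def sconj {d : ℕ} (p : SPoly d) : SPoly d :=
  rename (Sum.map (Sum.elim Sum.inr Sum.inl) (Sum.elim Sum.inr Sum.inl))
    (map (starRingEnd ℂ) p)

/-- The matrix `xx* ⊗ yy*`, with rows and columns indexed by pairs `(i,j)`. -/
noncomputable def pureState (d : ℕ) (x y : Fin d → ℂ) :
    Matrix (Fin d × Fin d) (Fin d × Fin d) ℂ :=
  Matrix.of fun p q => x p.1 * starRingEnd ℂ (x q.1) * (y p.2 * starRingEnd ℂ (y q.2))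

/-- The cone of (unnormalized) separable states. -/
def SEP (d : ℕ) : Set (Matrix (Fin d × Fin d) (Fin d × Fin d) ℂ) :=
  { ρ | ∃ (r : ℕ) (c : Fin r → ℝ) (x y : Fin r → (Fin d → ℂ)),
      (∀ ℓ, 0 ≤ c ℓ) ∧ (∀ ℓ, ∑ i, Complex.normSq (x ℓ i) = 1) ∧
      (∀ ℓ, ∑ i, Complex.normSq (y ℓ i) = 1) ∧
      ρ = ∑ ℓ, (c ℓ : ℂ) • pureState d (x ℓ) (y ℓ) }

/-- Largest diagonal entry `ρ_max` of `ρ`. -/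
noncomputable def rhoMax (d : ℕ) (ρ : Matrix (Fin d × Fin d) (Fin d × Fin d) ℂ) : ℝ :=
  ⨆ p : Fin d × Fin d, (ρ p p).re

/-- The degree-four monomial `x_i x̄_{i'} y_j ȳ_{j'}`. -/
noncomputable def momPoly {d : ℕ} (i i' j j' : Fin d) : SPoly d :=
  X (xv i) * X (xbv i') * X (yv j) * X (ybv j')

/-- The localizing polynomials `S_ρ`. -/
noncomputable def Sloc (d : ℕ) (ρ : Matrix (Fin d × Fin d) (Fin d × Fin d) ℂ) :
    Set (SPoly d) :=
  (Set.range fun i : Fin d =>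
    (C ((Real.sqrt (rhoMax d ρ) : ℂ)) : SPoly d) - X (xv i) * X (xbv i)) ∪
  (Set.range fun j : Fin d =>
    (C ((Real.sqrt (rhoMax d ρ) : ℂ)) : SPoly d) - X (yv j) * X (ybv j))

/-- The truncated quadratic module `𝓜(S)_{2t}`. -/
def QMt (d : ℕ) (S : Set (SPoly d)) (t : ℕ) : Set (SPoly d) :=
  { q | ∃ (N : ℕ) (c : Fin N → ℝ) (g p : Fin N → SPoly d),
      (∀ s, 0 ≤ c s) ∧ (∀ s, g s ∈ S ∪ {1}) ∧
      (∀ s, (g s * (p s * sconj (p s))).totalDegree ≤ 2 * t) ∧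
      q = ∑ s, C (c s : ℂ) * (g s * (p s * sconj (p s))) }

/-- The (untruncated) quadratic module `𝓜(S)`. -/
def QMf (d : ℕ) (S : Set (SPoly d)) : Set (SPoly d) :=
  { q | ∃ (N : ℕ) (c : Fin N → ℝ) (g p : Fin N → SPoly d),
      (∀ s, 0 ≤ c s) ∧ (∀ s, g s ∈ S ∪ {1}) ∧
      q = ∑ s, C (c s : ℂ) * (g s * (p s * sconj (p s))) }

/-- Feasibility for the order-`t` program defining `ξ_t^sep(ρ)`. -/
def IsFeas (d t : ℕ) (ρ : Matrix (Fin d × Fin d) (Fin d × Fin d) ℂ)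
    (L : SPoly d →ₗ[ℂ] ℂ) : Prop :=
  (∀ p, L (sconj p) = star (L p)) ∧
  (∀ i i' j j', L (momPoly i i' j j') = ρ (i, j) (i', j')) ∧
  (∀ q ∈ QMt d (Sloc d ρ) t, 0 ≤ L q) ∧
  (∀ q : Fin d → Fin d → SPoly d, (∀ i j, (q i j).totalDegree ≤ t - 2) →
    0 ≤ ∑ i, ∑ j, ∑ i', ∑ j',
      L ((C (ρ (i, j) (i', j')) - momPoly i i' j j') * (q i j * sconj (q i' j'))))

/-- Feasibility for the order-`∞` program. -/
def IsFeasInf (d : ℕ) (ρ : Matrix (Fin d × Fin d) (Fin d × Fin d) ℂ)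
    (L : SPoly d →ₗ[ℂ] ℂ) : Prop :=
  (∀ p, L (sconj p) = star (L p)) ∧
  (∀ i i' j j', L (momPoly i i' j j') = ρ (i, j) (i', j')) ∧
  (∀ q ∈ QMf d (Sloc d ρ), 0 ≤ L q) ∧
  (∀ q : Fin d → Fin d → SPoly d,
    0 ≤ ∑ i, ∑ j, ∑ i', ∑ j',
      L ((C (ρ (i, j) (i', j')) - momPoly i i' j j') * (q i j * sconj (q i' j'))))

/-- `ξ_t^sep(ρ)`. -/
noncomputable def xiSep (d t : ℕ) (ρ : Matrix (Fin d × Fin d) (Fin d × Fin d) ℂ) : ℝ≥0∞ :=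
  sInf { e | ∃ L : SPoly d →ₗ[ℂ] ℂ, IsFeas d t ρ L ∧ e = ENNReal.ofReal (L 1).re }

/-- `ξ_∞^sep(ρ)`. -/
noncomputable def xiSepInf (d : ℕ) (ρ : Matrix (Fin d × Fin d) (Fin d × Fin d) ℂ) : ℝ≥0∞ :=
  sInf { e | ∃ L : SPoly d →ₗ[ℂ] ℂ, IsFeasInf d ρ L ∧ e = ENNReal.ofReal (L 1).re }



/-! ### Auxiliary lemmas -/

noncomputable def sconjRH {d : ℕ} : SPoly d →+* SPoly d :=
  ((rename (Sum.map (Sum.elim Sum.inr Sum.inl) (Sum.elim Sum.inr Sum.inl))).toRingHom.comp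
    (map (starRingEnd ℂ)))

lemma sconj_eq_RH {d : ℕ} (p : SPoly d) : sconj p = sconjRH p := rfl

lemma sconj_C {d : ℕ} (a : ℂ) : sconj (C a : SPoly d) = C (starRingEnd ℂ a) := by
  simp [sconj, map_C]

lemma sconj_one {d : ℕ} : sconj (1 : SPoly d) = 1 := by simp [sconj]

lemma sconj_mul {d : ℕ} (p q : SPoly d) : sconj (p * q) = sconj p * sconj q := by
  simp only [sconj_eq_RH, map_mul]

lemma sconj_sum {d : ℕ} {ι : Type*} (s : Finset ι) (f : ι → SPoly d) :
    sconj (∑ i ∈ s, f i) = ∑ i ∈ s, sconj (f i) := by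
  simp only [sconj_eq_RH, map_sum]

lemma sconj_X_xv {d : ℕ} (i : Fin d) : sconj (X (xv i)) = X (xbv i) := by
  simp [sconj, xv, xbv]

lemma sconj_X_yv {d : ℕ} (j : Fin d) : sconj (X (yv j)) = X (ybv j) := by
  simp [sconj, yv, ybv]

lemma totalDegree_sconj_le {d : ℕ} (p : SPoly d) : (sconj p).totalDegree ≤ p.totalDegree := by
  refine (totalDegree_rename_le _ _).trans ?_
  exact Finset.sup_mono (support_map_subset _ _)

lemma QMt_zero (d : ℕ) (S : Set (SPoly d)) (t : ℕ) : (0 : SPoly d) ∈ QMt d S t :=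
  ⟨0, Fin.elim0, Fin.elim0, Fin.elim0, fun s => s.elim0, fun s => s.elim0,
    fun s => s.elim0, by simp⟩

lemma QMt_add {d : ℕ} {S : Set (SPoly d)} {t : ℕ} {a b : SPoly d}
    (ha : a ∈ QMt d S t) (hb : b ∈ QMt d S t) : a + b ∈ QMt d S t := by
  obtain ⟨N₁, c₁, g₁, p₁, hc₁, hg₁, hd₁, rfl⟩ := ha
  obtain ⟨N₂, c₂, g₂, p₂, hc₂, hg₂, hd₂, rfl⟩ := hb
  refine ⟨N₁ + N₂, Fin.append c₁ c₂, Fin.append g₁ g₂, Fin.append p₁ p₂, ?_, ?_, ?_, ?_⟩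
  · intro s
    induction s using Fin.addCases with
    | left i => simpa using hc₁ i
    | right i => simpa using hc₂ i
  · intro s
    induction s using Fin.addCases with
    | left i => simpa using hg₁ i
    | right i => simpa using hg₂ i
  · intro s
    induction s using Fin.addCases with
    | left i => simpa using hd₁ i
    | right i => simpa using hd₂ i
  · rw [Fin.sum_univ_add]
    simp

lemma QMt_single {d : ℕ} {S : Set (SPoly d)} {t : ℕ} (c : ℝ) (hc : 0 ≤ c)
    (g p : SPoly d) (hg : g ∈ S ∪ {1})
    (hdeg : (g * (p * sconj p)).totalDegree ≤ 2 * t) :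
    C (c : ℂ) * (g * (p * sconj p)) ∈ QMt d S t :=
  ⟨1, fun _ => c, fun _ => g, fun _ => p, fun _ => hc, fun _ => hg, fun _ => hdeg, by simp⟩

lemma QMt_sum {d : ℕ} {S : Set (SPoly d)} {t : ℕ} {ι : Type*} (s : Finset ι)
    (f : ι → SPoly d) (h : ∀ i ∈ s, f i ∈ QMt d S t) : ∑ i ∈ s, f i ∈ QMt d S t :=
  Finset.sum_induction f (· ∈ QMt d S t) (fun _ _ ha hb => QMt_add ha hb) (QMt_zero d S t) h

lemma deg_term_le {d t : ℕ} (ht : 2 ≤ t) (g p : SPoly d) (gg pp : ℕ)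
    (hg : g.totalDegree ≤ gg) (hp : p.totalDegree ≤ pp) (hb : gg + 2 * pp ≤ 4) :
    (g * (p * sconj p)).totalDegree ≤ 2 * t := by
  have h1 := totalDegree_mul g (p * sconj p)
  have h2 := totalDegree_mul p (sconj p)
  have h3 := totalDegree_sconj_le p
  omega

lemma key_identity {d : ℕ} (u v : SPoly d) (a : ℂ) (ha : a ≠ 0) :
    (1 : SPoly d) - C ((4*a^2)⁻¹) * (u*v)
      = C (2⁻¹ : ℂ) + C ((8*a)⁻¹) * v + C ((8*a)⁻¹) * u + C ((4*a)⁻¹) * (C a - u)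
        + C ((4*a)⁻¹) * (C a - v) + C ((8*a^2)⁻¹) * ((C a - u) * v)
        + C ((8*a^2)⁻¹) * ((C a - v) * u) := by
  have expand : ∀ w z : SPoly d, (C a - w) * z = a • z - w * z := by
    intro w z; rw [sub_mul, C_mul']
  rw [expand, expand]
  simp only [C_mul']
  simp only [C_eq_smul_one, smul_sub, smul_smul]
  rw [mul_comm v u]
  match_scalars <;> field_simp <;> ring

lemma E3a {d : ℕ} (r : ℝ) :
    (∑ i : Fin d, ∑ i' : Fin d, ∑ j : Fin d, ∑ j' : Fin d,
      C (starRingEnd ℂ (((r:ℂ) • (1 : Matrix (Fin d × Fin d) (Fin d × Fin d) ℂ)) (i,j) (i',j'))) *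
        momPoly i i' j j')
    = C (r:ℂ) * ((∑ i : Fin d, X (xv i) * X (xbv i)) * (∑ j : Fin d, X (yv j) * X (ybv j))) := by
  have hentry : ∀ i i' j j' : Fin d,
      C (starRingEnd ℂ (((r:ℂ) • (1 : Matrix (Fin d × Fin d) (Fin d × Fin d) ℂ)) (i,j) (i',j')))
        * momPoly i i' j j'
      = if i = i' then (if j = j' then C (r:ℂ) * momPoly i i' j j' else 0) else 0 := by
    intro i i' j j'
    simp [Matrix.one_apply, Prod.ext_iff, ite_and, apply_ite (starRingEnd ℂ),
      apply_ite (C : ℂ → SPoly d), Complex.conj_ofReal]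
  simp only [hentry]
  simp only [Finset.sum_ite_irrel, Finset.sum_const_zero, Finset.sum_ite_eq,
    Finset.mem_univ, if_true]
  rw [Finset.sum_mul_sum, Finset.mul_sum]
  refine Finset.sum_congr rfl fun i _ => ?_
  rw [Finset.mul_sum]
  refine Finset.sum_congr rfl fun j _ => ?_
  unfold momPoly
  ring

noncomputable def pkAux {d : ℕ} (B : Matrix (Fin d × Fin d) (Fin d × Fin d) ℂ)
    (k : Fin d × Fin d) : SPoly d :=
  ∑ p : Fin d × Fin d, C (B k p) * (X (xv p.1) * X (yv p.2))

lemma pkAux_totalDegree_le {d : ℕ} (B : Matrix (Fin d × Fin d) (Fin d × Fin d) ℂ)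
    (k : Fin d × Fin d) : (pkAux B k).totalDegree ≤ 2 := by
  refine totalDegree_finsetSum_le fun p _ => ?_
  refine (totalDegree_mul _ _).trans ?_
  rw [totalDegree_C, zero_add]
  refine (totalDegree_mul _ _).trans ?_
  simp [totalDegree_X]

lemma E2gram {d : ℕ} (B : Matrix (Fin d × Fin d) (Fin d × Fin d) ℂ) :
    (∑ i : Fin d, ∑ i' : Fin d, ∑ j : Fin d, ∑ j' : Fin d,
      C (starRingEnd ℂ ((B.conjTranspose * B) (i,j) (i',j'))) * momPoly i i' j j')
    = ∑ k : Fin d × Fin d, (pkAux B k * sconj (pkAux B k)) := by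
  unfold pkAux
  have hsconj : ∀ k, sconj (∑ p : Fin d × Fin d, C (B k p) * (X (xv p.1) * X (yv p.2)))
      = ∑ q : Fin d × Fin d, C (starRingEnd ℂ (B k q)) * (X (xbv q.1) * X (ybv q.2)) := by
    intro k
    rw [sconj_sum]
    exact Finset.sum_congr rfl fun q _ => by
      rw [sconj_mul, sconj_mul, sconj_C, sconj_X_xv, sconj_X_yv]
  have hrhs : ∑ k : Fin d × Fin d,
        ((∑ p : Fin d × Fin d, C (B k p) * (X (xv p.1) * X (yv p.2))) *
         sconj (∑ p : Fin d × Fin d, C (B k p) * (X (xv p.1) * X (yv p.2))))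
      = ∑ p : Fin d × Fin d, ∑ q : Fin d × Fin d,
          C (∑ k : Fin d × Fin d, B k p * starRingEnd ℂ (B k q)) *
            momPoly p.1 q.1 p.2 q.2 := by
    simp only [hsconj, Finset.sum_mul_sum]
    rw [Finset.sum_comm]
    refine Finset.sum_congr rfl fun p _ => ?_
    rw [Finset.sum_comm]
    refine Finset.sum_congr rfl fun q _ => ?_
    rw [map_sum, Finset.sum_mul]
    refine Finset.sum_congr rfl fun k _ => ?_
    rw [map_mul]
    unfold momPoly
    ring
  rw [hrhs]
  have hentry : ∀ p q : Fin d × Fin d,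
      starRingEnd ℂ ((B.conjTranspose * B) p q)
        = ∑ k : Fin d × Fin d, B k p * starRingEnd ℂ (B k q) := by
    intro p q
    rw [Matrix.mul_apply, map_sum]
    refine Finset.sum_congr rfl fun k _ => ?_
    rw [Matrix.conjTranspose_apply, map_mul]
    simp [mul_comm]
  conv_rhs => rw [Fintype.sum_prod_type]
  refine Finset.sum_congr rfl fun i _ => ?_
  rw [Finset.sum_comm]
  refine Finset.sum_congr rfl fun j _ => ?_
  rw [Fintype.sum_prod_type]
  exact Finset.sum_congr rfl fun i' _ => Finset.sum_congr rfl fun j' _ => by rw [hentry]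

lemma psd_of_norm_le {n : Type*} [Fintype n] [DecidableEq n]
    (Λ : Matrix n n ℂ) (hΛ : Λ.IsHermitian) (r : ℝ)
    (h : ‖Matrix.toEuclideanCLM (𝕜 := ℂ) Λ‖ ≤ r) :
    ((r:ℂ) • (1 : Matrix n n ℂ) - Λ).PosSemidef := by
  have hr : (0:ℝ) ≤ r := le_trans (norm_nonneg _) h
  rw [Matrix.posSemidef_iff_dotProduct_mulVec]
  constructor
  · refine Matrix.IsHermitian.sub ?_ hΛ
    unfold Matrix.IsHermitian
    rw [Matrix.conjTranspose_smul, Matrix.conjTranspose_one]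
    simp [Complex.star_def, Complex.conj_ofReal]
  · intro x
    set x' : EuclideanSpace ℂ n := (WithLp.equiv 2 _).symm x with hx'
    have hdot : dotProduct (star x) (Λ.mulVec x)
        = inner ℂ x' (Matrix.toEuclideanCLM (𝕜 := ℂ) Λ x') := by
      rw [hx']
      exact dotProduct_comm _ _
    have hself : dotProduct (star x) x = (‖x'‖:ℂ)^2 := by
      have hK := inner_self_eq_norm_sq_to_K (𝕜 := ℂ) x'
      exact (dotProduct_comm _ _).trans hK
    set z : ℂ := inner ℂ x' (Matrix.toEuclideanCLM (𝕜 := ℂ) Λ x') with hz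
    have hzim : z.im = 0 := by
      have hsym : (Matrix.toEuclideanLin Λ).IsSymmetric :=
        Matrix.isHermitian_iff_isSymmetric.mp hΛ
      have hTl : (Matrix.toEuclideanCLM (𝕜 := ℂ) Λ) x' = Matrix.toEuclideanLin Λ x' := rfl
      have hcz : (starRingEnd ℂ) z = z := by
        rw [hz, hTl, inner_conj_symm]
        exact hsym x' x'
      exact Complex.conj_eq_iff_im.mp hcz
    have hzre : z.re ≤ r * ‖x'‖^2 := by
      calc z.re ≤ ‖z‖ := Complex.re_le_norm z
        _ ≤ ‖x'‖ * ‖Matrix.toEuclideanCLM (𝕜 := ℂ) Λ x'‖ := norm_inner_le_norm _ _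
        _ ≤ ‖x'‖ * (‖Matrix.toEuclideanCLM (𝕜 := ℂ) Λ‖ * ‖x'‖) := by
            gcongr
            exact ContinuousLinearMap.le_opNorm _ _
        _ ≤ ‖x'‖ * (r * ‖x'‖) := by gcongr
        _ = r * ‖x'‖^2 := by ring
    have hcalc : dotProduct (star x) ((((r:ℂ) • (1 : Matrix n n ℂ)) - Λ).mulVec x)
        = (r:ℂ) * (‖x'‖:ℂ)^2 - z := by
      rw [Matrix.sub_mulVec, dotProduct_sub, Matrix.smul_mulVec,
        Matrix.one_mulVec, dotProduct_smul, hself, hdot, hz, smul_eq_mul]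
    rw [hcalc, show ((‖x'‖:ℂ))^2 = ((‖x'‖^2 : ℝ):ℂ) by push_cast; ring, Complex.le_def]
    constructor
    · simp only [Complex.zero_re, Complex.sub_re, Complex.mul_re, Complex.ofReal_re,
        Complex.ofReal_im, mul_zero, zero_mul, sub_zero]
      linarith [hzre]
    · simp only [Complex.zero_im, Complex.sub_im, Complex.mul_im, Complex.ofReal_re,
        Complex.ofReal_im, mul_zero, zero_mul, add_zero, hzim]
      ring

/-- for Hermitian `ρ` with `ρ_max > 0`, `t ≥ 2` and
`R = 2d√ρ_max`, every Hermitian `Λ` with operator norm `‖Λ‖ ≤ R⁻²` yields a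
polynomial `1 − ⟨Λ, xx*⊗yy*⟩` lying in the truncated quadratic module
`𝓜(S_ρ)_{2t}`. -/
theorem stmt18 {d : ℕ} (ρ : Matrix (Fin d × Fin d) (Fin d × Fin d) ℂ)
    (hρ : ρ.IsHermitian) (hmax : 0 < rhoMax d ρ) (t : ℕ) (ht : 2 ≤ t)
    (Λ : Matrix (Fin d × Fin d) (Fin d × Fin d) ℂ) (hΛ : Λ.IsHermitian)
    (hnorm : ‖Matrix.toEuclideanCLM (𝕜 := ℂ) Λ‖ ≤
      ((2 * (d : ℝ) * Real.sqrt (rhoMax d ρ)) ^ 2)⁻¹) :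
    ((1 : SPoly d) - ∑ i, ∑ i', ∑ j, ∑ j',
        C (starRingEnd ℂ (Λ (i, j) (i', j'))) * momPoly i i' j j')
      ∈ QMt d (Sloc d ρ) t := by
  -- d is positive
  rcases Nat.eq_zero_or_pos d with rfl | hd
  · exfalso
    have h0 : rhoMax 0 ρ = 0 := by
      have : IsEmpty (Fin 0 × Fin 0) := by infer_instance
      simp [rhoMax, Real.iSup_of_isEmpty]
    rw [h0] at hmax
    exact lt_irrefl 0 hmax
  classical
  set W : SPoly d := ∑ i : Fin d, ∑ i' : Fin d, ∑ j : Fin d, ∑ j' : Fin d,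
      C (starRingEnd ℂ (Λ (i, j) (i', j'))) * momPoly i i' j j' with hW
  set s : ℝ := Real.sqrt (rhoMax d ρ) with hsdef
  have hs : 0 < s := Real.sqrt_pos.mpr hmax
  have hds : (0:ℝ) < (d:ℝ) * s := by positivity
  set r : ℝ := ((2 * (d : ℝ) * s) ^ 2)⁻¹ with hrdef
  -- the PSD matrix and its Gram decomposition
  have hM : ((r:ℂ) • (1 : Matrix (Fin d × Fin d) (Fin d × Fin d) ℂ) - Λ).PosSemidef :=
    psd_of_norm_le Λ hΛ r hnorm
  obtain ⟨B, hB⟩ : ∃ B : Matrix (Fin d × Fin d) (Fin d × Fin d) ℂ,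
      ((r:ℂ) • (1 : Matrix (Fin d × Fin d) (Fin d × Fin d) ℂ) - Λ) = B.conjTranspose * B := by
    open MatrixOrder in exact CStarAlgebra.nonneg_iff_eq_star_mul_self.mp hM.nonneg
  -- notation
  set SXe : SPoly d := ∑ i : Fin d, X (xv i) * X (xbv i) with hSXe
  set SYe : SPoly d := ∑ j : Fin d, X (yv j) * X (ybv j) with hSYe
  set aC : ℂ := (((d:ℝ) * s : ℝ) : ℂ) with haCdef
  have haC : aC ≠ 0 := by
    rw [haCdef]
    exact_mod_cast ne_of_gt hds
  set c2 : ℝ := (8 * ((d:ℝ) * s))⁻¹ with hc2def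
  set c3 : ℝ := (4 * ((d:ℝ) * s))⁻¹ with hc3def
  set c4 : ℝ := (8 * ((d:ℝ) * s)^2)⁻¹ with hc4def
  have hc2c : ((c2:ℝ):ℂ) = (8*aC)⁻¹ := by rw [hc2def, haCdef]; push_cast; ring
  have hc3c : ((c3:ℝ):ℂ) = (4*aC)⁻¹ := by rw [hc3def, haCdef]; push_cast; ring
  have hc4c : ((c4:ℝ):ℂ) = (8*aC^2)⁻¹ := by rw [hc4def, haCdef]; push_cast; ring
  have hrc : ((r:ℝ):ℂ) = (4*aC^2)⁻¹ := by
    rw [hrdef, haCdef]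
    push_cast
    rw [show (2*(d:ℂ)*(s:ℂ))^2 = 4*((d:ℂ)*(s:ℂ))^2 by ring]
  have hhalf : (((2⁻¹:ℝ)):ℂ) = (2⁻¹:ℂ) := by push_cast; ring
  -- sums of localizing polynomials
  have hXg : (∑ i : Fin d, ((C ((s:ℂ)) : SPoly d) - X (xv i) * X (xbv i))) = C aC - SXe := by
    rw [Finset.sum_sub_distrib, Finset.sum_const, Finset.card_univ, Fintype.card_fin, ← hSXe]
    congr 1
    rw [nsmul_eq_mul, ← map_natCast (C : ℂ →+* SPoly d) d, ← map_mul]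
    congr 1
    rw [haCdef]; push_cast; ring
  have hYg : (∑ j : Fin d, ((C ((s:ℂ)) : SPoly d) - X (yv j) * X (ybv j))) = C aC - SYe := by
    rw [Finset.sum_sub_distrib, Finset.sum_const, Finset.card_univ, Fintype.card_fin, ← hSYe]
    congr 1
    rw [nsmul_eq_mul, ← map_natCast (C : ℂ →+* SPoly d) d, ← map_mul]
    congr 1
    rw [haCdef]; push_cast; ring
  -- block equalities
  have hT2 : (∑ j : Fin d, C ((c2:ℝ):ℂ) * (X (yv j) * X (ybv j)) : SPoly d)
      = C ((8*aC)⁻¹) * SYe := by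
    rw [← Finset.mul_sum, ← hSYe, hc2c]
  have hT3 : (∑ i : Fin d, C ((c2:ℝ):ℂ) * (X (xv i) * X (xbv i)) : SPoly d)
      = C ((8*aC)⁻¹) * SXe := by
    rw [← Finset.mul_sum, ← hSXe, hc2c]
  have hT4 : (∑ i : Fin d, C ((c3:ℝ):ℂ) * ((C ((s:ℂ)) : SPoly d) - X (xv i) * X (xbv i)))
      = C ((4*aC)⁻¹) * (C aC - SXe) := by
    rw [← Finset.mul_sum, hXg, hc3c]
  have hT5 : (∑ j : Fin d, C ((c3:ℝ):ℂ) * ((C ((s:ℂ)) : SPoly d) - X (yv j) * X (ybv j)))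
      = C ((4*aC)⁻¹) * (C aC - SYe) := by
    rw [← Finset.mul_sum, hYg, hc3c]
  have hT6 : (∑ q : Fin d × Fin d, C ((c4:ℝ):ℂ) *
        (((C ((s:ℂ)) : SPoly d) - X (xv q.1) * X (xbv q.1)) * (X (yv q.2) * X (ybv q.2))))
      = C ((8*aC^2)⁻¹) * ((C aC - SXe) * SYe) := by
    rw [← Finset.mul_sum, hc4c]
    congr 1
    rw [← hXg, hSYe, Finset.sum_mul_sum, Fintype.sum_prod_type]
  have hT7 : (∑ q : Fin d × Fin d, C ((c4:ℝ):ℂ) *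
        (((C ((s:ℂ)) : SPoly d) - X (yv q.2) * X (ybv q.2)) * (X (xv q.1) * X (xbv q.1))))
      = C ((8*aC^2)⁻¹) * ((C aC - SYe) * SXe) := by
    rw [← Finset.mul_sum, hc4c]
    congr 1
    rw [← hYg, hSXe, Finset.sum_mul_sum, Fintype.sum_prod_type]
    rw [Finset.sum_comm]
  -- the Gram part
  have hGram : C ((r:ℝ):ℂ) * (SXe * SYe) - W
      = ∑ k : Fin d × Fin d, (pkAux B k * sconj (pkAux B k)) := by
    have h2 := E2gram B
    rw [← hB] at h2
    rw [← h2]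
    rw [hW, hSXe, hSYe]
    simp only [Matrix.sub_apply, map_sub, sub_mul, Finset.sum_sub_distrib]
    rw [E3a r]
  -- the main identity
  have hmainEq : (1 : SPoly d) - W
      = C ((2⁻¹:ℝ):ℂ)
        + (∑ j : Fin d, C ((c2:ℝ):ℂ) * (X (yv j) * X (ybv j)))
        + (∑ i : Fin d, C ((c2:ℝ):ℂ) * (X (xv i) * X (xbv i)))
        + (∑ i : Fin d, C ((c3:ℝ):ℂ) * ((C ((s:ℂ)) : SPoly d) - X (xv i) * X (xbv i)))
        + (∑ j : Fin d, C ((c3:ℝ):ℂ) * ((C ((s:ℂ)) : SPoly d) - X (yv j) * X (ybv j)))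
        + (∑ q : Fin d × Fin d, C ((c4:ℝ):ℂ) *
            (((C ((s:ℂ)) : SPoly d) - X (xv q.1) * X (xbv q.1)) * (X (yv q.2) * X (ybv q.2))))
        + (∑ q : Fin d × Fin d, C ((c4:ℝ):ℂ) *
            (((C ((s:ℂ)) : SPoly d) - X (yv q.2) * X (ybv q.2)) * (X (xv q.1) * X (xbv q.1))))
        + (∑ k : Fin d × Fin d, (pkAux B k * sconj (pkAux B k))) := by
    rw [hT2, hT3, hT4, hT5, hT6, hT7, ← hGram, hhalf]
    rw [← key_identity SXe SYe aC haC, hrc]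
    ring
  rw [show ((1 : SPoly d) - W) = _ from hmainEq]
  -- memberships
  have hGxdeg : ∀ i : Fin d, ((C ((s:ℂ)) : SPoly d) - X (xv i) * X (xbv i)).totalDegree ≤ 2 := by
    intro i
    refine (totalDegree_sub _ _).trans ?_
    simp only [totalDegree_C, max_le_iff]
    exact ⟨Nat.zero_le _, (totalDegree_mul _ _).trans (by simp [totalDegree_X])⟩
  have hGydeg : ∀ j : Fin d, ((C ((s:ℂ)) : SPoly d) - X (yv j) * X (ybv j)).totalDegree ≤ 2 := by
    intro j
    refine (totalDegree_sub _ _).trans ?_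
    simp only [totalDegree_C, max_le_iff]
    exact ⟨Nat.zero_le _, (totalDegree_mul _ _).trans (by simp [totalDegree_X])⟩
  have hXdeg : ∀ v : SVar d, (X v : SPoly d).totalDegree ≤ 1 :=
    fun v => le_of_eq (totalDegree_X v)
  have hgx : ∀ i : Fin d, ((C ((s:ℂ)) : SPoly d) - X (xv i) * X (xbv i)) ∈ Sloc d ρ ∪ {1} :=
    fun i => Set.mem_union_left _ (Set.mem_union_left _ ⟨i, rfl⟩)
  have hgy : ∀ j : Fin d, ((C ((s:ℂ)) : SPoly d) - X (yv j) * X (ybv j)) ∈ Sloc d ρ ∪ {1} :=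
    fun j => Set.mem_union_left _ (Set.mem_union_right _ ⟨j, rfl⟩)
  have hone : (1 : SPoly d) ∈ Sloc d ρ ∪ {1} := Set.mem_union_right _ rfl
  have hc2n : 0 ≤ c2 := by rw [hc2def]; positivity
  have hc3n : 0 ≤ c3 := by rw [hc3def]; positivity
  have hc4n : 0 ≤ c4 := by rw [hc4def]; positivity
  refine QMt_add (QMt_add (QMt_add (QMt_add (QMt_add (QMt_add (QMt_add ?_ ?_) ?_) ?_) ?_) ?_) ?_) ?_
  · have := QMt_single (t := t) (S := Sloc d ρ) 2⁻¹ (by norm_num) 1 1 hone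
      (deg_term_le ht 1 1 0 0 (by simp) (by simp) (by norm_num))
    simpa [sconj_one] using this
  · refine QMt_sum _ _ fun j _ => ?_
    have := QMt_single (t := t) (S := Sloc d ρ) c2 hc2n 1 (X (yv j)) hone
      (deg_term_le ht 1 (X (yv j)) 0 1 (by simp) (hXdeg _) (by norm_num))
    simpa [sconj_one, sconj_X_yv] using this
  · refine QMt_sum _ _ fun i _ => ?_
    have := QMt_single (t := t) (S := Sloc d ρ) c2 hc2n 1 (X (xv i)) hone
      (deg_term_le ht 1 (X (xv i)) 0 1 (by simp) (hXdeg _) (by norm_num))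
    simpa [sconj_one, sconj_X_xv] using this
  · refine QMt_sum _ _ fun i _ => ?_
    have := QMt_single (t := t) (S := Sloc d ρ) c3 hc3n _ 1 (hgx i)
      (deg_term_le ht _ 1 2 0 (hGxdeg i) (by simp) (by norm_num))
    simpa [sconj_one] using this
  · refine QMt_sum _ _ fun j _ => ?_
    have := QMt_single (t := t) (S := Sloc d ρ) c3 hc3n _ 1 (hgy j)
      (deg_term_le ht _ 1 2 0 (hGydeg j) (by simp) (by norm_num))
    simpa [sconj_one] using this
  · refine QMt_sum _ _ fun q _ => ?_
    have := QMt_single (t := t) (S := Sloc d ρ) c4 hc4n _ (X (yv q.2)) (hgx q.1)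
      (deg_term_le ht _ (X (yv q.2)) 2 1 (hGxdeg q.1) (hXdeg _) (by norm_num))
    simpa [sconj_X_yv] using this
  · refine QMt_sum _ _ fun q _ => ?_
    have := QMt_single (t := t) (S := Sloc d ρ) c4 hc4n _ (X (xv q.1)) (hgy q.2)
      (deg_term_le ht _ (X (xv q.1)) 2 1 (hGydeg q.2) (hXdeg _) (by norm_num))
    simpa [sconj_X_xv] using this
  · refine QMt_sum _ _ fun k _ => ?_
    have := QMt_single (t := t) (S := Sloc d ρ) 1 zero_le_one 1 (pkAux B k) hone
      (deg_term_le ht 1 (pkAux B k) 0 2 (by simp) (pkAux_totalDegree_le B k) (by norm_num))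
    simpa [sconj_one] using this
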